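/- Let U ⊂ V be finite subsets of ℤ^d and let G^U, G^V be the Green functions of the discrete bilaplacian with Dirichlet (zero outside domain) conditions on U and V respectively. Then for every x ∈ U, G^V(x,x) ≥ G^U(x,x). -/

import Mathlib

open scoped BigOperators

/-- The discrete Laplacian on `ℤ^d`: `Δf(x) = (1/(2d)) Σ_{y∼x} (f(y) − f(x))`. -/
noncomputable def discLap (d : ℕ) (f : (Fin d → ℤ) → ℝ) (x : Fin d → ℤ) : ℝ :=
  (1 / (2 * (d : ℝ))) *
    ∑ i : Fin d, ((f (x + Pi.single i 1) - f x) + (f (x - Pi.single i 1) - f x))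

open Function Set

section Aux

variable {d : ℕ}

private lemma supp_add (f : (Fin d → ℤ) → ℝ) (hf : (support f).Finite) (v : Fin d → ℤ) :
    (support fun y => f (y + v)).Finite := by
  have h : (support fun y => f (y + v)) = (Equiv.addRight v) ⁻¹' (support f) := rfl
  rw [h]
  exact hf.preimage (Equiv.injective _).injOn

private lemma supp_sub (f : (Fin d → ℤ) → ℝ) (hf : (support f).Finite) (v : Fin d → ℤ) :
    (support fun y => f (y - v)).Finite := by
  have h : (support fun y => f (y - v)) = (Equiv.subRight v) ⁻¹' (support f) := rfl
  rw [h]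
  exact hf.preimage (Equiv.injective _).injOn

private lemma supp_discLap (f : (Fin d → ℤ) → ℝ) (hf : (support f).Finite) :
    (support (discLap d f)).Finite := by
  apply Set.Finite.subset
    (s := support f ∪ ⋃ i : Fin d,
      ((support fun y => f (y + Pi.single i 1)) ∪ (support fun y => f (y - Pi.single i 1))))
  · exact hf.union (Set.finite_iUnion fun i =>
      (supp_add f hf _).union (supp_sub f hf _))
  · intro y hy
    by_contra hmem
    simp only [Set.mem_union, Set.mem_iUnion, not_or, not_exists, Function.mem_support,
      not_not] at hmem
    obtain ⟨h0, hi⟩ := hmem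
    apply hy
    unfold discLap
    rw [Finset.sum_eq_zero, mul_zero]
    intro i _
    rw [h0, (hi i).1, (hi i).2]
    ring

private lemma supp_mul_right (a g : (Fin d → ℤ) → ℝ) (hg : (support g).Finite) :
    (support fun y => a y * g y).Finite :=
  hg.subset fun y hy => by
    simp only [Function.mem_support] at hy ⊢
    exact fun h => hy (by rw [h, mul_zero])

private lemma supp_mul_left (f b : (Fin d → ℤ) → ℝ) (hf : (support f).Finite) :
    (support fun y => f y * b y).Finite :=
  hf.subset fun y hy => by
    simp only [Function.mem_support] at hy ⊢
    exact fun h => hy (by rw [h, zero_mul])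

private lemma finsum_shift_add (h : (Fin d → ℤ) → ℝ) (v : Fin d → ℤ) :
    ∑ᶠ y, h (y + v) = ∑ᶠ y, h y := by
  simpa using finsum_comp_equiv (Equiv.addRight v) (f := h)

private lemma finsum_shift_sub (h : (Fin d → ℤ) → ℝ) (v : Fin d → ℤ) :
    ∑ᶠ y, h (y - v) = ∑ᶠ y, h y := by
  simpa using finsum_comp_equiv (Equiv.subRight v) (f := h)

/-- Summation by parts for the discrete Laplacian. -/
private lemma discLap_parts (f g : (Fin d → ℤ) → ℝ) (hf : (support f).Finite)
    (hg : (support g).Finite) :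
    ∑ᶠ y, discLap d f y * g y = ∑ᶠ y, f y * discLap d g y := by
  set c : ℝ := 1 / (2 * (d : ℝ)) with hc
  have pointL : ∀ y, discLap d f y * g y =
      ∑ i : Fin d, c * (((f (y + Pi.single i 1) - f y) + (f (y - Pi.single i 1) - f y)) * g y) := by
    intro y
    rw [discLap, mul_assoc, Finset.sum_mul, Finset.mul_sum]
  have pointR : ∀ y, f y * discLap d g y =
      ∑ i : Fin d, c * (f y * ((g (y + Pi.single i 1) - g y) + (g (y - Pi.single i 1) - g y))) := by
    intro y
    rw [discLap, mul_left_comm, Finset.mul_sum, Finset.mul_sum]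
  have hsupg : ∀ p : (Fin d → ℤ) → ℝ, (support fun y => p y * g y).Finite :=
    fun p => supp_mul_right p g hg
  have hsupf : ∀ q : (Fin d → ℤ) → ℝ, (support fun y => f y * q y).Finite :=
    fun q => supp_mul_left f q hf
  have hsupgc : ∀ p : (Fin d → ℤ) → ℝ, (support fun y => c * (p y * g y)).Finite :=
    fun p => hg.subset fun y hy => by
      simp only [Function.mem_support] at hy ⊢
      exact fun h => hy (by rw [h, mul_zero, mul_zero])
  have hsupfc : ∀ q : (Fin d → ℤ) → ℝ, (support fun y => c * (f y * q y)).Finite :=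
    fun q => hf.subset fun y hy => by
      simp only [Function.mem_support] at hy ⊢
      exact fun h => hy (by rw [h, zero_mul, mul_zero])
  rw [finsum_congr pointL, finsum_congr pointR]
  rw [finsum_sum_comm _ _ (fun i _ => hsupgc _), finsum_sum_comm _ _ (fun i _ => hsupfc _)]
  refine Finset.sum_congr rfl fun i _ => ?_
  set e : Fin d → ℤ := Pi.single i 1 with he
  rw [← mul_finsum (fun y => ((f (y + e) - f y) + (f (y - e) - f y)) * g y) c,
      ← mul_finsum (fun y => f y * ((g (y + e) - g y) + (g (y - e) - g y))) c]
  congr 1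
  have expandL : ∀ y, ((f (y + e) - f y) + (f (y - e) - f y)) * g y
      = (f (y + e) * g y + f (y - e) * g y) - ((f y + f y) * g y) := fun y => by ring
  have expandR : ∀ y, f y * ((g (y + e) - g y) + (g (y - e) - g y))
      = (f y * g (y + e) + f y * g (y - e)) - (f y * (g y + g y)) := fun y => by ring
  rw [finsum_congr expandL, finsum_congr expandR]
  have hABg : (support fun y => f (y + e) * g y + f (y - e) * g y).Finite :=
    hg.subset fun y hy => by
      simp only [Function.mem_support] at hy ⊢
      exact fun h => hy (by rw [h, mul_zero, mul_zero, add_zero])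
  have hABf : (support fun y => f y * g (y + e) + f y * g (y - e)).Finite :=
    hf.subset fun y hy => by
      simp only [Function.mem_support] at hy ⊢
      exact fun h => hy (by rw [h, zero_mul, zero_mul, add_zero])
  rw [finsum_sub_distrib hABg (hsupg _), finsum_sub_distrib hABf (hsupf _),
      finsum_add_distrib (hsupg fun y => f (y + e)) (hsupg fun y => f (y - e)),
      finsum_add_distrib (hsupf fun y => g (y + e)) (hsupf fun y => g (y - e))]
  have r1 : ∑ᶠ y, f (y + e) * g y = ∑ᶠ y, f y * g (y - e) := by
    have h := finsum_shift_add (fun y => f y * g (y - e)) e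
    simpa using h
  have r2 : ∑ᶠ y, f (y - e) * g y = ∑ᶠ y, f y * g (y + e) := by
    have h := finsum_shift_sub (fun y => f y * g (y + e)) e
    simpa using h
  have r3 : (∑ᶠ y, (f y + f y) * g y) = ∑ᶠ y, f y * (g y + g y) :=
    finsum_congr fun y => by ring
  rw [r1, r2, r3]
  ring

/-- Reproducing property: if `G` is a Green function on `W` and `f` is supported in `W`,
then the Dirichlet pairing of `G x` and `f` equals `f x`. -/
private lemma reproducing (W : Finset (Fin d → ℤ)) (G f : (Fin d → ℤ) → ℝ) (x : Fin d → ℤ)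
    (hxW : x ∈ W)
    (hGsupp : ∀ y, y ∉ W → G y = 0)
    (hGreen : ∀ y ∈ W, discLap d (discLap d G) y = if y = x then 1 else 0)
    (hfsupp : ∀ y, y ∉ W → f y = 0) :
    ∑ᶠ y, discLap d G y * discLap d f y = f x := by
  have hGfin : (support G).Finite :=
    W.finite_toSet.subset fun y hy => by
      by_contra h
      exact hy (hGsupp y h)
  have hffin : (support f).Finite :=
    W.finite_toSet.subset fun y hy => by
      by_contra h
      exact hy (hfsupp y h)
  rw [← discLap_parts (discLap d G) f (supp_discLap G hGfin) hffin]
  have hsub : (support fun y => discLap d (discLap d G) y * f y) ⊆ (W : Set (Fin d → ℤ)) := by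
    intro y hy
    by_contra h
    simp only [Function.mem_support] at hy
    exact hy (by rw [hfsupp y h, mul_zero])
  rw [finsum_eq_sum_of_support_subset _ hsub]
  rw [Finset.sum_congr rfl fun y hyW => by rw [hGreen y hyW]]
  simp only [ite_mul, one_mul, zero_mul]
  rw [Finset.sum_ite_eq' W x f]
  simp [hxW]

end Aux

/-- Monotonicity of the Green function of the discrete bilaplacian with Dirichlet
(zero outside the domain) conditions: if `U ⊆ V` are finite subsets of `ℤ^d` then
`G^V(x,x) ≥ G^U(x,x)` for every `x ∈ U`. -/
theorem green_monotone (d : ℕ) (U V : Finset (Fin d → ℤ)) (hUV : U ⊆ V)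
    (GU GV : (Fin d → ℤ) → (Fin d → ℤ) → ℝ)
    (hGUsupp₁ : ∀ x y, x ∉ U → GU x y = 0)
    (hGUsupp₂ : ∀ x y, y ∉ U → GU x y = 0)
    (hGUgreen : ∀ x, ∀ y ∈ U, discLap d (discLap d (GU x)) y = if y = x then 1 else 0)
    (hGVsupp₁ : ∀ x y, x ∉ V → GV x y = 0)
    (hGVsupp₂ : ∀ x y, y ∉ V → GV x y = 0)
    (hGVgreen : ∀ x, ∀ y ∈ V, discLap d (discLap d (GV x)) y = if y = x then 1 else 0) :
    ∀ x ∈ U, GU x x ≤ GV x x := by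
  intro x hx
  have hGUfin : (Function.support (GU x)).Finite :=
    U.finite_toSet.subset fun y hy => by
      by_contra h
      exact hy (hGUsupp₂ x y h)
  have hGVfin : (Function.support (GV x)).Finite :=
    V.finite_toSet.subset fun y hy => by
      by_contra h
      exact hy (hGVsupp₂ x y h)
  set a : (Fin d → ℤ) → ℝ := discLap d (GU x) with ha
  set b : (Fin d → ℤ) → ℝ := discLap d (GV x) with hb
  have hafin : (Function.support a).Finite := supp_discLap _ hGUfin
  have hbfin : (Function.support b).Finite := supp_discLap _ hGVfin
  have hA : ∑ᶠ y, a y * a y = GU x x :=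
    reproducing U (GU x) (GU x) x hx (hGUsupp₂ x) (hGUgreen x) (hGUsupp₂ x)
  have hB : ∑ᶠ y, b y * a y = GU x x :=
    reproducing V (GV x) (GU x) x (hUV hx) (hGVsupp₂ x) (hGVgreen x)
      (fun y hy => hGUsupp₂ x y fun hyU => hy (hUV hyU))
  have hC : ∑ᶠ y, b y * b y = GV x x :=
    reproducing V (GV x) (GV x) x (hUV hx) (hGVsupp₂ x) (hGVgreen x) (hGVsupp₂ x)
  -- convert the finsums to sums over a common finite set
  set T : Finset (Fin d → ℤ) := (hafin.union hbfin).toFinset with hT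
  have haT : Function.support a ⊆ (T : Set (Fin d → ℤ)) := by
    intro y hy; simp [hT]; left; exact hy
  have hbT : Function.support b ⊆ (T : Set (Fin d → ℤ)) := by
    intro y hy; simp [hT]; right; exact hy
  have hmul : ∀ (p q : (Fin d → ℤ) → ℝ), Function.support p ⊆ (T : Set (Fin d → ℤ)) →
      ∑ᶠ y, p y * q y = ∑ y ∈ T, p y * q y := by
    intro p q hp
    refine finsum_eq_sum_of_support_subset _ fun y hy => ?_
    apply hp
    simp only [Function.mem_support] at hy ⊢
    exact fun h => hy (by rw [h, zero_mul])
  rw [hmul a a haT] at hA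
  rw [hmul b a hbT] at hB
  rw [hmul b b hbT] at hC
  have key : ∑ y ∈ T, (b y - a y) * (b y - a y)
      = (∑ y ∈ T, b y * b y) - 2 * (∑ y ∈ T, b y * a y) + ∑ y ∈ T, a y * a y := by
    rw [Finset.mul_sum, ← Finset.sum_sub_distrib, ← Finset.sum_add_distrib]
    exact Finset.sum_congr rfl fun y _ => by ring
  have h0 : (0 : ℝ) ≤ ∑ y ∈ T, (b y - a y) * (b y - a y) :=
    Finset.sum_nonneg fun y _ => mul_self_nonneg _
  rw [key, hA, hB, hC] at h0
  linarith
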